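/- Let G1 and G2 be torsion groups each having more than 2 elements. If the monoids of product-one sequences B(G1) and B(G2) are isomorphic as monoids, then the abelianizations G1/G1' and G2/G2' (quotients by the commutator subgroups) are isomorphic groups. -/

import Mathlib

set_option linter.unusedSectionVars false
set_option maxHeartbeats 1600000
open Finsupp
open scoped Pointwise Classical


/-- A multiset `S` over a group `G` is a *product-one sequence* if its terms can be
ordered so that their product is `1`. -/
def IsProductOne {G : Type*} [Group G] (S : Multiset G) : Prop :=
  ∃ l : List G, (l : Multiset G) = S ∧ l.prod = 1

/-- The monoid `B(G)` of product-one sequences over `G`, as a submonoid of the free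
abelian monoid (finite multisets under addition) over `G`. -/
def ProductOneSubmonoid (G : Type*) [Group G] : AddSubmonoid (Multiset G) where
  carrier := {S | IsProductOne S}
  zero_mem' := ⟨[], rfl, rfl⟩
  add_mem' := by
    rintro a b ⟨l1, rfl, p1⟩ ⟨l2, rfl, p2⟩
    exact ⟨l1 ++ l2, by simp, by simp [p1, p2]⟩


namespace POS
variable {G : Type*} [Group G]

noncomputable def mG : Multiset G →+ (G →₀ ℤ) :=
  (Finsupp.mapRange.addMonoidHom (Nat.castAddMonoidHom ℤ)).comp
    (Multiset.toFinsupp (α := G)).toAddMonoidHom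

lemma mG_apply (S : Multiset G) (g : G) : mG S g = S.count g := by
  simp [mG]

lemma mG_injective : Function.Injective (mG (G := G)) := by
  intro S T h
  have : ∀ g, S.count g = T.count g := by
    intro g
    have := congrArg (fun x => x g) h
    simpa [mG_apply] using this
  exact Multiset.ext.2 this

lemma mG_nonneg (S : Multiset G) (g : G) : 0 ≤ mG S g := by
  simp [mG_apply]

lemma mG_singleton (g : G) : mG ({g} : Multiset G) = Finsupp.single g 1 := by
  ext k; simp [mG_apply, Multiset.count_singleton, Finsupp.single_apply, eq_comm]

lemma mG_cons (g : G) (S : Multiset G) :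
    mG (g ::ₘ S) = Finsupp.single g 1 + mG S := by
  have : (g ::ₘ S) = ({g} : Multiset G) + S := by simp
  rw [this, map_add, mG_singleton]

/-- the set of images of product-one sequences -/
def BSet (G : Type*) [Group G] : Set (G →₀ ℤ) := {x | ∃ S, IsProductOne S ∧ mG S = x}

/-- K = subgroup generated by product-one sequences -/
noncomputable def KG (G : Type*) [Group G] : AddSubgroup (G →₀ ℤ) :=
  AddSubgroup.closure (BSet G)

noncomputable def phiG (G : Type*) [Group G] : (G →₀ ℤ) →+ Additive (Abelianization G) :=
  Finsupp.liftAddHom fun g => (zmultiplesHom _) (Additive.ofMul (Abelianization.of g))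

lemma phiG_single (g : G) :
    phiG G (Finsupp.single g 1) = Additive.ofMul (Abelianization.of g) := by
  simp [phiG]

lemma phiG_mG_list (l : List G) :
    phiG G (mG (l : Multiset G)) = Additive.ofMul (Abelianization.of l.prod) := by
  induction l with
  | nil => simp
  | cons a l ih =>
      have : ((a :: l : List G) : Multiset G) = a ::ₘ (l : Multiset G) := rfl
      rw [this, mG_cons, map_add, phiG_single, ih]
      simp [List.prod_cons]

lemma phiG_of_productOne {S : Multiset G} (hS : IsProductOne S) : phiG G (mG S) = 0 := by
  obtain ⟨l, rfl, hp⟩ := hS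
  rw [phiG_mG_list, hp]
  simp

lemma KG_le_ker : KG G ≤ (phiG G).ker := by
  rw [KG, AddSubgroup.closure_le]
  rintro x ⟨S, hS, rfl⟩
  exact phiG_of_productOne hS

lemma mem_KG_of_productOne {S : Multiset G} (hS : IsProductOne S) : mG S ∈ KG G :=
  AddSubgroup.subset_closure ⟨S, hS, rfl⟩

/-- the quotient -/
noncomputable abbrev QG (G : Type*) [Group G] := (G →₀ ℤ) ⧸ KG G

lemma productOne_pair (g : G) : IsProductOne (g ::ₘ g⁻¹ ::ₘ 0) :=
  ⟨[g, g⁻¹], rfl, by simp⟩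

lemma productOne_triple (g h : G) : IsProductOne (g ::ₘ h ::ₘ (g*h)⁻¹ ::ₘ 0) :=
  ⟨[g, h, (g*h)⁻¹], rfl, by simp [mul_assoc]⟩

lemma single_rel_mem_KG (g h : G) :
    Finsupp.single g (1:ℤ) + Finsupp.single h (1:ℤ) - Finsupp.single (g*h) (1:ℤ) ∈ KG G := by
  have h1 : Finsupp.single g (1:ℤ) + (Finsupp.single h (1:ℤ) + (Finsupp.single ((g*h)⁻¹) (1:ℤ) + 0)) ∈ KG G := by
    have := mem_KG_of_productOne (productOne_triple g h)
    simpa [mG_cons, mG_singleton, map_zero] using this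
  have h2 : Finsupp.single (g*h) (1:ℤ) + (Finsupp.single ((g*h)⁻¹) (1:ℤ) + 0) ∈ KG G := by
    have := mem_KG_of_productOne (productOne_pair (g*h))
    simpa [mG_cons, mG_singleton, map_zero] using this
  have e : Finsupp.single g (1:ℤ) + Finsupp.single h (1:ℤ) - Finsupp.single (g*h) (1:ℤ)
      = (Finsupp.single g (1:ℤ) + (Finsupp.single h (1:ℤ) + (Finsupp.single ((g*h)⁻¹) (1:ℤ) + 0)))
        - (Finsupp.single (g*h) (1:ℤ) + (Finsupp.single ((g*h)⁻¹) (1:ℤ) + 0)) := by abel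
  rw [e]
  exact AddSubgroup.sub_mem _ h1 h2

noncomputable def psi0 (G : Type*) [Group G] : G →* Multiplicative (QG G) where
  toFun g := Multiplicative.ofAdd (QuotientAddGroup.mk (Finsupp.single g (1:ℤ)))
  map_one' := by
    have h1 : (Finsupp.single (1:G) (1:ℤ) : G →₀ ℤ) ∈ KG G := by
      have := mem_KG_of_productOne (G := G) ⟨[1], rfl, by simp⟩
      simpa [mG_singleton] using this
    have := (QuotientAddGroup.eq_zero_iff (N := KG G) (Finsupp.single (1:G) (1:ℤ))).2 h1
    simpa [ofAdd_eq_one] using this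
  map_mul' g h := by
    have key : (QuotientAddGroup.mk (Finsupp.single (g*h) (1:ℤ)) : QG G)
        = QuotientAddGroup.mk (Finsupp.single g (1:ℤ) + Finsupp.single h (1:ℤ)) := by
      rw [QuotientAddGroup.eq_iff_sub_mem]
      have hm := single_rel_mem_KG g h
      have h' : Finsupp.single (g*h) (1:ℤ) - (Finsupp.single g (1:ℤ) + Finsupp.single h (1:ℤ))
          = -(Finsupp.single g (1:ℤ) + Finsupp.single h (1:ℤ) - Finsupp.single (g*h) (1:ℤ)) := by abel
      rw [h']
      exact AddSubgroup.neg_mem _ hm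
    simp only [key]
    rfl

end POS

namespace POS
variable {G : Type*} [Group G]

noncomputable def psiHom (G : Type*) [Group G] : Additive (Abelianization G) →+ QG G :=
  MonoidHom.toAdditiveLeft (Abelianization.lift (psi0 G))

lemma psiHom_of (g : G) :
    psiHom G (Additive.ofMul (Abelianization.of g))
      = QuotientAddGroup.mk (Finsupp.single g (1:ℤ)) := by
  simp [psiHom, psi0]

noncomputable def piHom (G : Type*) [Group G] : QG G →+ Additive (Abelianization G) :=
  QuotientAddGroup.lift (KG G) (phiG G) KG_le_ker

lemma piHom_mk (x : G →₀ ℤ) : piHom G (QuotientAddGroup.mk x) = phiG G x := rfl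

lemma pi_psi (a : Additive (Abelianization G)) : piHom G (psiHom G a) = a := by
  obtain ⟨g, hg⟩ := QuotientGroup.mk'_surjective (commutator G) (Additive.toMul a)
  have ha : a = Additive.ofMul (Abelianization.of g) := Additive.toMul.injective hg.symm
  rw [ha, psiHom_of, piHom_mk, phiG_single]

lemma psi_pi (q : QG G) : psiHom G (piHom G q) = q := by
  have key : ((psiHom G).comp (piHom G)).comp (QuotientAddGroup.mk' (KG G))
      = QuotientAddGroup.mk' (KG G) := by
    apply Finsupp.addHom_ext'
    intro g
    apply AddMonoidHom.ext_int
    simp only [AddMonoidHom.comp_apply, Finsupp.singleAddHom_apply]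
    rw [QuotientAddGroup.mk'_apply, piHom_mk, phiG_single, psiHom_of]
  obtain ⟨x, rfl⟩ := QuotientAddGroup.mk'_surjective (KG G) q
  exact DFunLike.congr_fun key x

/-- Step A: the abelianization is isomorphic to the quotient -/
noncomputable def stepA (G : Type*) [Group G] : Additive (Abelianization G) ≃+ QG G :=
  { toFun := psiHom G
    invFun := piHom G
    left_inv := pi_psi
    right_inv := psi_pi
    map_add' := map_add _ }

lemma mem_KG_iff {x : G →₀ ℤ} : x ∈ KG G ↔ phiG G x = 0 := by
  constructor
  · exact fun h => KG_le_ker h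
  · intro h
    have : (QuotientAddGroup.mk x : QG G) = 0 := by
      have := psi_pi (QuotientAddGroup.mk x : QG G)
      rw [piHom_mk, h] at this
      simpa using this.symm
    exact (QuotientAddGroup.eq_zero_iff x).1 this

/-- decomposition of elements of K as differences -/
lemma mem_KG_decomp {x : G →₀ ℤ} (hx : x ∈ KG G) :
    ∃ S T : Multiset G, IsProductOne S ∧ IsProductOne T ∧ x = mG S - mG T := by
  let D : AddSubgroup (G →₀ ℤ) :=
    { carrier := {z | ∃ S T : Multiset G, IsProductOne S ∧ IsProductOne T ∧ z = mG S - mG T}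
      zero_mem' := ⟨0, 0, ⟨[], rfl, rfl⟩, ⟨[], rfl, rfl⟩, by simp⟩
      add_mem' := by
        rintro a b ⟨S, T, hS, hT, rfl⟩ ⟨S', T', hS', hT', rfl⟩
        exact ⟨S + S', T + T', (ProductOneSubmonoid G).add_mem hS hS',
          (ProductOneSubmonoid G).add_mem hT hT', by rw [map_add, map_add]; abel⟩
      neg_mem' := by
        rintro a ⟨S, T, hS, hT, rfl⟩
        exact ⟨T, S, hT, hS, by abel⟩ }
  have : KG G ≤ D := by
    rw [KG, AddSubgroup.closure_le]
    rintro z ⟨S, hS, rfl⟩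
    exact ⟨S, 0, hS, ⟨[], rfl, rfl⟩, by simp⟩
  exact this hx

lemma exists_multiset_of_nonneg {x : G →₀ ℤ} (hx : ∀ g, 0 ≤ x g) :
    ∃ S : Multiset G, mG S = x := by
  refine ⟨Finsupp.toMultiset (x.mapRange Int.toNat Int.toNat_zero), ?_⟩
  ext g
  rw [mG_apply]
  rw [Finsupp.count_toMultiset]
  simp only [Finsupp.mapRange_apply]
  exact_mod_cast Int.toNat_of_nonneg (hx g)

/-- torsion: every nonneg element of K has a positive multiple in BSet -/
lemma exists_nsmul_mem_BSet (htor : ∀ g : G, IsOfFinOrder g) {x : G →₀ ℤ}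
    (hx : ∀ g, 0 ≤ x g) : ∃ n : ℕ, 0 < n ∧ ∃ (S : Multiset G), IsProductOne S ∧ mG S = n • x := by
  obtain ⟨S, rfl⟩ := exists_multiset_of_nonneg hx
  set l := S.toList with hl
  have hlS : (l : Multiset G) = S := Multiset.coe_toList S
  set n := orderOf l.prod with hn
  have hpos : 0 < n := (htor l.prod).orderOf_pos
  have hco : ∀ m : ℕ, ((List.replicate m l).flatten : Multiset G) = m • (l : Multiset G) := by
    intro m
    induction m with
    | zero => simp
    | succ k ih =>
        rw [List.replicate_succ, List.flatten_cons, ← Multiset.coe_add, ih, succ_nsmul']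
  refine ⟨n, hpos, n • S, ⟨(List.replicate n l).flatten, ?_, ?_⟩, by rw [map_nsmul]⟩
  · rw [hco, hlS]
  · rw [List.prod_flatten]
    simp only [List.map_replicate, List.prod_replicate]
    exact pow_orderOf_eq_one l.prod

end POS

namespace POS
variable {G : Type*} [Group G]

lemma exists_ne_ne (hcard : 2 < Cardinal.mk G) (x y : G) : ∃ h : G, h ≠ x ∧ h ≠ y := by
  by_contra hc
  push_neg at hc
  have hsub : (Set.univ : Set G) ⊆ {x, y} := by
    intro g _
    rcases eq_or_ne g x with h | h
    · exact Set.mem_insert_iff.2 (Or.inl h)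
    · exact Set.mem_insert_iff.2 (Or.inr (hc g h))
  have h1 : Cardinal.mk G ≤ Cardinal.mk ({x, y} : Set G) := by
    rw [← Cardinal.mk_univ]
    exact Cardinal.mk_le_mk_of_subset hsub
  have h2 : Cardinal.mk ({x, y} : Set G) ≤ 2 := by
    have h4 : Cardinal.mk ↥(insert x ({y} : Set G)) ≤ Cardinal.mk ↥({y} : Set G) + 1 :=
      Cardinal.mk_insert_le
    have h3 : Cardinal.mk ({y} : Set G) = 1 := Cardinal.mk_singleton y
    rw [h3, one_add_one_eq_two] at h4
    exact h4
  exact absurd (h1.trans h2) (not_le.2 hcard)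

/-- the "positive cone" of K -/
def CSet (G : Type*) [Group G] : Set (G →₀ ℤ) := {x | x ∈ KG G ∧ ∀ g, 0 ≤ x g}

lemma mG_mem_CSet {S : Multiset G} (hS : IsProductOne S) : mG S ∈ CSet G :=
  ⟨mem_KG_of_productOne hS, mG_nonneg S⟩

lemma CSet_zero : (0 : G →₀ ℤ) ∈ CSet G := ⟨AddSubgroup.zero_mem _, by simp⟩

lemma CSet_add {x y : G →₀ ℤ} (hx : x ∈ CSet G) (hy : y ∈ CSet G) : x + y ∈ CSet G :=
  ⟨AddSubgroup.add_mem _ hx.1 hy.1, fun g => by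
    rw [Finsupp.add_apply]; exact add_nonneg (hx.2 g) (hy.2 g)⟩

lemma single_one_apply_nonneg (h k : G) : (0:ℤ) ≤ Finsupp.single h (1:ℤ) k := by
  rw [Finsupp.single_apply]
  split <;> norm_num

/-- The key separation lemma, using 2 < |G| -/
lemma separation (hcard : 2 < Cardinal.mk G) {v w : G →₀ ℤ}
    (H : ∀ z ∈ KG G, (∀ g, z g ≤ v g) → (∀ g, z g ≤ w g)) : ∀ g, v g ≤ w g := by
  intro g
  obtain ⟨a, ha⟩ := QuotientGroup.mk'_surjective (commutator G) (Additive.toMul (phiG G v))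
  have ha' : Additive.ofMul (Abelianization.of a) = phiG G v := Additive.toMul.injective ha
  obtain ⟨h, hh1, hh2⟩ := exists_ne_ne hcard g (a * g⁻¹)
  set h' := h⁻¹ * a with hh'
  have hne' : h' ≠ g := by
    intro e
    apply hh2
    have : a = h * g := by rw [← e, hh']; group
    rw [this]; group
  set z := v - Finsupp.single h 1 - Finsupp.single h' 1 with hz
  have hzK : z ∈ KG G := by
    rw [mem_KG_iff]
    rw [hz, map_sub, map_sub, phiG_single, phiG_single]
    have hmul : Abelianization.of h * Abelianization.of h' = Abelianization.of a := by
      rw [← map_mul]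
      congr 1
      rw [hh']; group
    have e : Additive.ofMul (Abelianization.of h) + Additive.ofMul (Abelianization.of h')
        = Additive.ofMul (Abelianization.of a) := by rw [← ofMul_mul, hmul]
    rw [← ha', ← e]
    abel
  have hzv : ∀ k, z k ≤ v k := by
    intro k
    rw [hz]
    simp only [Finsupp.sub_apply]
    have := single_one_apply_nonneg h k
    have := single_one_apply_nonneg h' k
    omega
  have hzw := H z hzK hzv
  have hzg : z g = v g := by
    rw [hz]
    simp only [Finsupp.sub_apply]
    rw [Finsupp.single_apply, if_neg hh1, Finsupp.single_apply, if_neg hne']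
    ring
  have := hzw g
  omega

lemma separation_eq (hcard : 2 < Cardinal.mk G) {v w : G →₀ ℤ}
    (H : ∀ z ∈ KG G, (∀ g, z g ≤ v g) ↔ (∀ g, z g ≤ w g)) : v = w := by
  ext g
  exact le_antisymm
    (separation hcard (fun z hz h => (H z hz).1 h) g)
    (separation hcard (fun z hz h => (H z hz).2 h) g)

/-! ### the meet operation on finite sets of finsupps -/

noncomputable def dF (X : Finset (G →₀ ℤ)) : G →₀ ℤ :=
  if h : X.Nonempty then X.inf' h id else 0

lemma dF_apply {X : Finset (G →₀ ℤ)} (h : X.Nonempty) (g : G) :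
    dF X g = X.inf' h (fun x => x g) := by
  rw [dF, dif_pos h]
  induction h using Finset.Nonempty.cons_induction with
  | singleton a => simp
  | cons a s ha hs ih =>
      rw [Finset.inf'_cons hs, Finset.inf'_cons hs]
      rw [Finsupp.inf_apply, ← ih]
      rfl

lemma dF_singleton (x : G →₀ ℤ) : dF {x} = x := by
  rw [dF, dif_pos (Finset.singleton_nonempty x)]
  simp

lemma dF_pair (x y : G →₀ ℤ) : dF {x, y} = x ⊓ y := by
  rw [dF, dif_pos ⟨x, Finset.mem_insert_self x {y}⟩]
  rcases eq_or_ne x y with rfl | hxy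
  · simp
  · rw [Finset.inf'_insert, Finset.inf'_singleton]
    rfl
    exact Finset.singleton_nonempty y

lemma dF_le_iff {X : Finset (G →₀ ℤ)} (h : X.Nonempty) (z : G →₀ ℤ) :
    (∀ g, z g ≤ dF X g) ↔ ∀ x ∈ X, ∀ g, z g ≤ x g := by
  constructor
  · intro hle x hx g
    exact (hle g).trans (by rw [dF_apply h]; exact Finset.inf'_le _ hx)
  · intro hle g
    rw [dF_apply h]
    exact Finset.le_inf' _ _ (fun x hx => hle x hx g)

lemma dF_add {X Y : Finset (G →₀ ℤ)} (hX : X.Nonempty) (hY : Y.Nonempty) :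
    dF (X + Y) = dF X + dF Y := by
  ext g
  rw [Finsupp.add_apply, dF_apply (hX.add hY), dF_apply hX, dF_apply hY]
  apply le_antisymm
  · obtain ⟨x, hx, hxe⟩ := Finset.exists_mem_eq_inf' hX (fun x => x g)
    obtain ⟨y, hy, hye⟩ := Finset.exists_mem_eq_inf' hY (fun x => x g)
    rw [hxe, hye]
    have hmem : x + y ∈ X + Y := Finset.add_mem_add hx hy
    have h5 := Finset.inf'_le (fun x => x g) hmem
    exact le_trans h5 (by rw [Finsupp.add_apply])
  · apply Finset.le_inf'
    intro z hz
    obtain ⟨x, hx, y, hy, rfl⟩ := Finset.mem_add.1 hz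
    have h1 := Finset.inf'_le (fun x => x g) hx
    have h2 := Finset.inf'_le (fun x => x g) hy
    rw [Finsupp.add_apply]
    exact add_le_add h1 h2

lemma dF_nonneg {X : Finset (G →₀ ℤ)} (hX : ∀ x ∈ X, ∀ g, (0:ℤ) ≤ x g) (g : G) :
    0 ≤ dF X g := by
  by_cases h : X.Nonempty
  · rw [dF_apply h]
    exact Finset.le_inf' _ _ (fun x hx => hX x hx g)
  · rw [dF, dif_neg h]
    simp

/-! ### lists of finsets, iterated sumsets -/

noncomputable def sumL (L : List (Finset (G →₀ ℤ))) : Finset (G →₀ ℤ) :=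
  L.foldr (· + ·) {0}

@[simp] lemma sumL_nil : sumL ([] : List (Finset (G →₀ ℤ))) = {0} := rfl

@[simp] lemma sumL_cons (X : Finset (G →₀ ℤ)) (L : List (Finset (G →₀ ℤ))) :
    sumL (X :: L) = X + sumL L := rfl

lemma sumL_nonempty (L : List (Finset (G →₀ ℤ))) (hL : ∀ X ∈ L, X.Nonempty) :
    (sumL L).Nonempty := by
  induction L with
  | nil => exact ⟨0, Finset.mem_singleton_self 0⟩
  | cons X L ih =>
      rw [sumL_cons]
      exact (hL X (List.mem_cons_self)).add (ih fun Y hY => hL Y (List.mem_cons_of_mem _ hY))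

lemma dF_sumL (L : List (Finset (G →₀ ℤ))) (hL : ∀ X ∈ L, X.Nonempty) :
    dF (sumL L) = (L.map dF).sum := by
  induction L with
  | nil => simp [dF_singleton]
  | cons X L ih =>
      rw [sumL_cons, dF_add (hL X (List.mem_cons_self))
        (sumL_nonempty L fun Y hY => hL Y (List.mem_cons_of_mem _ hY)),
        ih fun Y hY => hL Y (List.mem_cons_of_mem _ hY), List.map_cons, List.sum_cons]

lemma sumL_mem_CSet (L : List (Finset (G →₀ ℤ))) (hL : ∀ X ∈ L, ∀ x ∈ X, x ∈ CSet G) :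
    ∀ z ∈ sumL L, z ∈ CSet G := by
  induction L with
  | nil => intro z hz; rw [sumL_nil, Finset.mem_singleton] at hz; rw [hz]; exact CSet_zero
  | cons X L ih =>
      intro z hz
      rw [sumL_cons] at hz
      obtain ⟨x, hx, y, hy, rfl⟩ := Finset.mem_add.1 hz
      exact CSet_add (hL X (List.mem_cons_self) x hx)
        (ih (fun Y hY => hL Y (List.mem_cons_of_mem _ hY)) y hy)

end POS

namespace POS
variable {G : Type*} [Group G]

/-- auxiliary element avoiding 1 and g⁻¹ -/
noncomputable def hAux (hcard : 2 < Cardinal.mk G) (g : G) : G :=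
  Classical.choose (exists_ne_ne hcard 1 g⁻¹)

lemma hAux_ne_one (hcard : 2 < Cardinal.mk G) (g : G) : hAux hcard g ≠ 1 :=
  (Classical.choose_spec (exists_ne_ne hcard 1 g⁻¹)).1

lemma hAux_ne_inv (hcard : 2 < Cardinal.mk G) (g : G) : hAux hcard g ≠ g⁻¹ :=
  (Classical.choose_spec (exists_ne_ne hcard 1 g⁻¹)).2

noncomputable def xOne (g : G) : G →₀ ℤ := mG (g ::ₘ g⁻¹ ::ₘ 0)

noncomputable def xTwo (hcard : 2 < Cardinal.mk G) (g : G) : G →₀ ℤ :=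
  mG (g ::ₘ hAux hcard g ::ₘ (g * hAux hcard g)⁻¹ ::ₘ 0)

noncomputable def XS (hcard : 2 < Cardinal.mk G) (g : G) : Finset (G →₀ ℤ) :=
  {xOne g, xTwo hcard g}

lemma XS_nonempty (hcard : 2 < Cardinal.mk G) (g : G) : (XS hcard g).Nonempty :=
  ⟨xOne g, Finset.mem_insert_self _ _⟩

lemma xOne_mem_CSet (g : G) : xOne g ∈ CSet G := mG_mem_CSet (productOne_pair g)

lemma xTwo_mem_CSet (hcard : 2 < Cardinal.mk G) (g : G) : xTwo hcard g ∈ CSet G :=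
  mG_mem_CSet (productOne_triple g (hAux hcard g))

lemma XS_subset_CSet (hcard : 2 < Cardinal.mk G) (g : G) :
    ∀ x ∈ XS hcard g, x ∈ CSet G := by
  intro x hx
  rcases Finset.mem_insert.1 hx with rfl | hx
  · exact xOne_mem_CSet g
  · rw [Finset.mem_singleton.1 hx]
    exact xTwo_mem_CSet hcard g

lemma xOne_eq (g : G) : xOne g = Finsupp.single g 1 + Finsupp.single g⁻¹ 1 := by
  rw [xOne, mG_cons, mG_cons, map_zero, add_zero]

lemma xTwo_eq (hcard : 2 < Cardinal.mk G) (g : G) :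
    xTwo hcard g = Finsupp.single g 1 + Finsupp.single (hAux hcard g) 1
      + Finsupp.single (g * hAux hcard g)⁻¹ 1 := by
  rw [xTwo, mG_cons, mG_cons, mG_cons, map_zero, add_zero, add_assoc]

/-- The crucial computation: `dF (XS g) = single g 1`. -/
lemma dF_XS (hcard : 2 < Cardinal.mk G) (g : G) :
    dF (XS hcard g) = Finsupp.single g (1:ℤ) := by
  set h := hAux hcard g with hdef
  have hne1 : h ≠ 1 := hAux_ne_one hcard g
  have hnei : h ≠ g⁻¹ := hAux_ne_inv hcard g
  rw [XS, dF_pair]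
  ext k
  rw [Finsupp.inf_apply, xOne_eq, xTwo_eq]
  simp only [Finsupp.add_apply, Finsupp.single_apply, ← hdef]
  rcases eq_or_ne g k with rfl | hgk
  · -- k = g
    rw [if_pos rfl]
    rcases eq_or_ne g⁻¹ g with hinv | hinv
    · -- g = g⁻¹ : x1 g = 2, must show x2 g = 1
      rw [if_pos hinv]
      have e1 : h ≠ g := by rw [← hinv]; exact hnei
      have e2 : (g * h)⁻¹ ≠ g := by
        intro e
        apply hne1
        have h1 : g * h = g⁻¹ := inv_eq_iff_eq_inv.mp e
        rw [hinv] at h1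
        exact mul_left_cancel (h1.trans (mul_one g).symm)
      rw [if_neg e1, if_neg e2]
      norm_num
    · rw [if_neg hinv]
      have h2 : (0:ℤ) ≤ (if h = g then (1:ℤ) else 0) := by split <;> norm_num
      have h3 : (0:ℤ) ≤ (if (g * h)⁻¹ = g then (1:ℤ) else 0) := by split <;> norm_num
      omega
  · -- k ≠ g
    rw [if_neg hgk]
    rcases eq_or_ne g⁻¹ k with hik | hik
    · -- k = g⁻¹ : x2 k = 0
      have e1 : h ≠ k := by rw [← hik]; exact hnei
      have e2 : (g * h)⁻¹ ≠ k := by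
        rw [← hik]
        intro e
        apply hne1
        have h1 : g * h = g := by
          have h2 := congrArg (·⁻¹) e
          simpa using h2
        exact mul_left_cancel (h1.trans (mul_one g).symm)
      rw [if_pos hik, if_neg e1, if_neg e2]
      norm_num
    · rw [if_neg hik]
      have h2 : (0:ℤ) ≤ (if h = k then (1:ℤ) else 0) := by split <;> norm_num
      have h3 : (0:ℤ) ≤ (if (g * h)⁻¹ = k then (1:ℤ) else 0) := by split <;> norm_num
      omega

end POS

namespace POS
variable {G1 G2 : Type*} [Group G1] [Group G2]

lemma mem_POS {G : Type*} [Group G] {S : Multiset G} :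
    S ∈ ProductOneSubmonoid G ↔ IsProductOne S := Iff.rfl

lemma productOne_zero {G : Type*} [Group G] : IsProductOne (0 : Multiset G) := ⟨[], rfl, rfl⟩

lemma theta_welldef (θ : ProductOneSubmonoid G1 ≃+ ProductOneSubmonoid G2)
    {S T S' T' : Multiset G1} (hS : IsProductOne S) (hT : IsProductOne T)
    (hS' : IsProductOne S') (hT' : IsProductOne T')
    (h : mG S - mG T = mG S' - mG T') :
    mG ((θ ⟨S, hS⟩ : ProductOneSubmonoid G2) : Multiset G2)
      - mG ((θ ⟨T, hT⟩ : ProductOneSubmonoid G2) : Multiset G2)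
      = mG ((θ ⟨S', hS'⟩ : ProductOneSubmonoid G2) : Multiset G2)
        - mG ((θ ⟨T', hT'⟩ : ProductOneSubmonoid G2) : Multiset G2) := by
  rw [sub_eq_sub_iff_add_eq_add] at h ⊢
  rw [← map_add, ← map_add] at h
  have hmult : S + T' = S' + T := mG_injective h
  have hsub : (⟨S, hS⟩ : ProductOneSubmonoid G1) + ⟨T', hT'⟩ = ⟨S', hS'⟩ + ⟨T, hT⟩ :=
    Subtype.ext hmult
  have := congrArg θ hsub
  rw [map_add, map_add] at this
  have hval := congrArg (fun z => ((z : ProductOneSubmonoid G2) : Multiset G2)) this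
  simp only [AddSubmonoid.coe_add] at hval
  rw [← map_add, ← map_add, hval]

noncomputable def tmap (θ : ProductOneSubmonoid G1 ≃+ ProductOneSubmonoid G2)
    (x : G1 →₀ ℤ) : G2 →₀ ℤ :=
  if h : ∃ p : Multiset G1 × Multiset G1,
      IsProductOne p.1 ∧ IsProductOne p.2 ∧ x = mG p.1 - mG p.2 then
    mG ((θ ⟨(Classical.choose h).1, (Classical.choose_spec h).1⟩ :
          ProductOneSubmonoid G2) : Multiset G2)
      - mG ((θ ⟨(Classical.choose h).2, (Classical.choose_spec h).2.1⟩ :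
          ProductOneSubmonoid G2) : Multiset G2)
  else 0

lemma tmap_eq (θ : ProductOneSubmonoid G1 ≃+ ProductOneSubmonoid G2)
    {x : G1 →₀ ℤ} {S T : Multiset G1} (hS : IsProductOne S) (hT : IsProductOne T)
    (hx : x = mG S - mG T) :
    tmap θ x = mG ((θ ⟨S, hS⟩ : ProductOneSubmonoid G2) : Multiset G2)
      - mG ((θ ⟨T, hT⟩ : ProductOneSubmonoid G2) : Multiset G2) := by
  have hex : ∃ p : Multiset G1 × Multiset G1,
      IsProductOne p.1 ∧ IsProductOne p.2 ∧ x = mG p.1 - mG p.2 := ⟨⟨S, T⟩, hS, hT, hx⟩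
  rw [tmap, dif_pos hex]
  exact theta_welldef θ _ _ hS hT
    (((Classical.choose_spec hex).2.2).symm.trans hx)

lemma tmap_mG (θ : ProductOneSubmonoid G1 ≃+ ProductOneSubmonoid G2)
    {S : Multiset G1} (hS : IsProductOne S) :
    tmap θ (mG S) = mG ((θ ⟨S, hS⟩ : ProductOneSubmonoid G2) : Multiset G2) := by
  rw [tmap_eq θ hS productOne_zero (by rw [map_zero, sub_zero])]
  have h0 : (⟨0, productOne_zero⟩ : ProductOneSubmonoid G1) = 0 := Subtype.ext rfl
  rw [h0, map_zero]
  simp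

lemma tmap_zero (θ : ProductOneSubmonoid G1 ≃+ ProductOneSubmonoid G2) :
    tmap θ 0 = 0 := by
  have := tmap_mG θ (productOne_zero (G := G1))
  rw [map_zero] at this
  rw [this]
  have h0 : (⟨0, productOne_zero⟩ : ProductOneSubmonoid G1) = 0 := Subtype.ext rfl
  rw [h0, map_zero]
  simp

lemma tmap_mem_KG (θ : ProductOneSubmonoid G1 ≃+ ProductOneSubmonoid G2)
    {x : G1 →₀ ℤ} (hx : x ∈ KG G1) : tmap θ x ∈ KG G2 := by
  obtain ⟨S, T, hS, hT, rfl⟩ := mem_KG_decomp hx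
  rw [tmap_eq θ hS hT rfl]
  exact AddSubgroup.sub_mem _
    (mem_KG_of_productOne (θ ⟨S, hS⟩).2)
    (mem_KG_of_productOne (θ ⟨T, hT⟩).2)

lemma tmap_add (θ : ProductOneSubmonoid G1 ≃+ ProductOneSubmonoid G2)
    {x y : G1 →₀ ℤ} (hx : x ∈ KG G1) (hy : y ∈ KG G1) :
    tmap θ (x + y) = tmap θ x + tmap θ y := by
  obtain ⟨S, T, hS, hT, rfl⟩ := mem_KG_decomp hx
  obtain ⟨S', T', hS', hT', rfl⟩ := mem_KG_decomp hy
  have hsum : (mG S - mG T) + (mG S' - mG T') = mG (S + S') - mG (T + T') := by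
    rw [map_add, map_add]; abel
  rw [tmap_eq θ hS hT rfl, tmap_eq θ hS' hT' rfl,
    tmap_eq θ ((ProductOneSubmonoid G1).add_mem hS hS')
      ((ProductOneSubmonoid G1).add_mem hT hT') hsum]
  have e1 : (⟨S + S', _⟩ : ProductOneSubmonoid G1) = ⟨S, hS⟩ + ⟨S', hS'⟩ := Subtype.ext rfl
  have e2 : (⟨T + T', _⟩ : ProductOneSubmonoid G1) = ⟨T, hT⟩ + ⟨T', hT'⟩ := Subtype.ext rfl
  rw [e1, e2, map_add, map_add]
  simp only [AddSubmonoid.coe_add, map_add]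
  abel

lemma tmap_sub (θ : ProductOneSubmonoid G1 ≃+ ProductOneSubmonoid G2)
    {x y : G1 →₀ ℤ} (hx : x ∈ KG G1) (hy : y ∈ KG G1) :
    tmap θ (x - y) = tmap θ x - tmap θ y := by
  have h1 : x - y ∈ KG G1 := AddSubgroup.sub_mem _ hx hy
  have := tmap_add θ h1 hy
  rw [sub_add_cancel] at this
  rw [this]
  abel

lemma tmap_symm_tmap (θ : ProductOneSubmonoid G1 ≃+ ProductOneSubmonoid G2)
    {x : G1 →₀ ℤ} (hx : x ∈ KG G1) : tmap θ.symm (tmap θ x) = x := by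
  obtain ⟨S, T, hS, hT, rfl⟩ := mem_KG_decomp hx
  rw [tmap_eq θ hS hT rfl]
  rw [tmap_eq θ.symm (θ ⟨S, hS⟩).2 (θ ⟨T, hT⟩).2 rfl]
  have e1 : (⟨((θ ⟨S, hS⟩ : ProductOneSubmonoid G2) : Multiset G2), (θ ⟨S, hS⟩).2⟩ :
      ProductOneSubmonoid G2) = θ ⟨S, hS⟩ := Subtype.ext rfl
  have e2 : (⟨((θ ⟨T, hT⟩ : ProductOneSubmonoid G2) : Multiset G2), (θ ⟨T, hT⟩).2⟩ :
      ProductOneSubmonoid G2) = θ ⟨T, hT⟩ := Subtype.ext rfl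
  rw [e1, e2, AddEquiv.symm_apply_apply, AddEquiv.symm_apply_apply]

lemma tmap_symm_symm (θ : ProductOneSubmonoid G1 ≃+ ProductOneSubmonoid G2) :
    tmap θ.symm.symm = tmap θ := by rw [AddEquiv.symm_symm]

lemma tmap_nsmul (θ : ProductOneSubmonoid G1 ≃+ ProductOneSubmonoid G2)
    {x : G1 →₀ ℤ} (hx : x ∈ KG G1) (n : ℕ) : tmap θ (n • x) = n • tmap θ x := by
  induction n with
  | zero => simp [tmap_zero]
  | succ m ih =>
      rw [succ_nsmul, succ_nsmul, tmap_add θ (AddSubgroup.nsmul_mem _ hx m) hx, ih]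

lemma tmap_CSet (θ : ProductOneSubmonoid G1 ≃+ ProductOneSubmonoid G2)
    (htor1 : ∀ g : G1, IsOfFinOrder g)
    {x : G1 →₀ ℤ} (hx : x ∈ CSet G1) : tmap θ x ∈ CSet G2 := by
  refine ⟨tmap_mem_KG θ hx.1, ?_⟩
  obtain ⟨n, hn, S, hS, hSx⟩ := exists_nsmul_mem_BSet htor1 hx.2
  intro g
  have h1 : n • tmap θ x = mG ((θ ⟨S, hS⟩ : ProductOneSubmonoid G2) : Multiset G2) := by
    rw [← tmap_nsmul θ hx.1, ← hSx, tmap_mG θ hS]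
  have h2 : 0 ≤ (n • tmap θ x) g := by rw [h1]; exact mG_nonneg _ g
  have h3 : (n • tmap θ x) g = n • (tmap θ x g) :=
    map_nsmul (Finsupp.applyAddHom (M := ℤ) g) n (tmap θ x)
  rw [h3, nsmul_eq_mul] at h2
  have hn' : (0:ℤ) < n := by exact_mod_cast hn
  exact le_of_mul_le_mul_left (by simpa using h2) hn'

end POS

namespace POS
variable {G1 G2 : Type*} [Group G1] [Group G2]

/-- transfer of the divisibility order across `tmap` -/
lemma key_le_equiv (θ : ProductOneSubmonoid G1 ≃+ ProductOneSubmonoid G2)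
    (htor1 : ∀ g : G1, IsOfFinOrder g) (htor2 : ∀ g : G2, IsOfFinOrder g)
    {x : G1 →₀ ℤ} {z : G2 →₀ ℤ} (hx : x ∈ CSet G1) (hz : z ∈ KG G2) :
    (∀ g, z g ≤ tmap θ x g) ↔ (∀ g, tmap θ.symm z g ≤ x g) := by
  constructor
  · intro hle
    have h1 : tmap θ x - z ∈ CSet G2 := by
      refine ⟨AddSubgroup.sub_mem _ (tmap_mem_KG θ hx.1) hz, fun g => ?_⟩
      rw [Finsupp.sub_apply]
      have := hle g
      omega
    have h2 : tmap θ.symm (tmap θ x - z) ∈ CSet G1 := tmap_CSet θ.symm htor2 h1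
    have h3 : tmap θ.symm (tmap θ x - z) = x - tmap θ.symm z := by
      rw [tmap_sub θ.symm (tmap_mem_KG θ hx.1) hz, tmap_symm_tmap θ hx.1]
    rw [h3] at h2
    intro g
    have := h2.2 g
    rw [Finsupp.sub_apply] at this
    omega
  · intro hle
    have h1 : x - tmap θ.symm z ∈ CSet G1 := by
      refine ⟨AddSubgroup.sub_mem _ hx.1 (tmap_mem_KG θ.symm hz), fun g => ?_⟩
      rw [Finsupp.sub_apply]
      have := hle g
      omega
    have h2 : tmap θ (x - tmap θ.symm z) ∈ CSet G2 := tmap_CSet θ htor1 h1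
    have h3 : tmap θ (x - tmap θ.symm z) = tmap θ x - z := by
      rw [tmap_sub θ hx.1 (tmap_mem_KG θ.symm hz)]
      congr 1
      have := tmap_symm_tmap θ.symm hz
      rw [tmap_symm_symm θ] at this
      exact this
    rw [h3] at h2
    intro g
    have := h2.2 g
    rw [Finsupp.sub_apply] at this
    omega

/-- B7 : the meet transfer lemma -/
lemma dF_image_congr (θ : ProductOneSubmonoid G1 ≃+ ProductOneSubmonoid G2)
    (htor1 : ∀ g : G1, IsOfFinOrder g) (htor2 : ∀ g : G2, IsOfFinOrder g)
    (hcard2 : 2 < Cardinal.mk G2)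
    {Y Z : Finset (G1 →₀ ℤ)} (hYne : Y.Nonempty) (hZne : Z.Nonempty)
    (hY : ∀ x ∈ Y, x ∈ CSet G1) (hZ : ∀ x ∈ Z, x ∈ CSet G1)
    (hd : dF Y = dF Z) :
    dF (Y.image (tmap θ)) = dF (Z.image (tmap θ)) := by
  have claim : ∀ (W : Finset (G1 →₀ ℤ)) (hW : W.Nonempty), (∀ x ∈ W, x ∈ CSet G1) →
      ∀ z ∈ KG G2, ((∀ g, z g ≤ dF (W.image (tmap θ)) g) ↔
        (∀ g, tmap θ.symm z g ≤ dF W g)) := by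
    intro W hW hWc z hz
    rw [dF_le_iff (hW.image _) z, dF_le_iff hW (tmap θ.symm z)]
    constructor
    · intro hle x hxW g
      exact (key_le_equiv θ htor1 htor2 (hWc x hxW) hz).1
        (fun g' => hle _ (Finset.mem_image_of_mem _ hxW) g') g
    · intro hle x' hx' g
      obtain ⟨x, hxW, rfl⟩ := Finset.mem_image.1 hx'
      exact (key_le_equiv θ htor1 htor2 (hWc x hxW) hz).2 (fun g' => hle x hxW g') g
  apply separation_eq hcard2
  intro z hz
  rw [claim Y hYne hY z hz, claim Z hZne hZ z hz, hd]

lemma image_tmap_add (θ : ProductOneSubmonoid G1 ≃+ ProductOneSubmonoid G2)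
    {X Y : Finset (G1 →₀ ℤ)} (hX : ∀ x ∈ X, x ∈ KG G1) (hY : ∀ x ∈ Y, x ∈ KG G1) :
    (X + Y).image (tmap θ) = X.image (tmap θ) + Y.image (tmap θ) := by
  ext w
  simp only [Finset.mem_image, Finset.mem_add]
  constructor
  · rintro ⟨z, ⟨x, hx, y, hy, rfl⟩, rfl⟩
    exact ⟨tmap θ x, ⟨x, hx, rfl⟩, tmap θ y, ⟨y, hy, rfl⟩, (tmap_add θ (hX x hx) (hY y hy)).symm⟩
  · rintro ⟨x', ⟨x, hx, rfl⟩, y', ⟨y, hy, rfl⟩, rfl⟩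
    exact ⟨x + y, ⟨x, hx, y, hy, rfl⟩, tmap_add θ (hX x hx) (hY y hy)⟩

lemma mG_list_eq (l : List G1) :
    mG (l : Multiset G1) = (l.map (fun g => Finsupp.single g (1:ℤ))).sum := by
  induction l with
  | nil => simp
  | cons a l ih =>
      have : ((a :: l : List G1) : Multiset G1) = a ::ₘ (l : Multiset G1) := rfl
      rw [this, mG_cons, ih, List.map_cons, List.sum_cons]

/-- d of image of a big sumset -/
lemma sum_dF_image (θ : ProductOneSubmonoid G1 ≃+ ProductOneSubmonoid G2)
    (l : List G1) (X : G1 → Finset (G1 →₀ ℤ))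
    (hne : ∀ g, (X g).Nonempty) (hC : ∀ g, ∀ x ∈ X g, x ∈ CSet G1) :
    (l.map (fun g => dF ((X g).image (tmap θ)))).sum
      = dF ((sumL (l.map X)).image (tmap θ)) := by
  induction l with
  | nil =>
      simp only [List.map_nil, List.sum_nil, sumL_nil]
      rw [Finset.image_singleton, tmap_zero θ, dF_singleton]
  | cons a l ih =>
      rw [List.map_cons, List.sum_cons, List.map_cons, sumL_cons, ih]
      have hXa : ∀ x ∈ X a, x ∈ KG G1 := fun x hx => (hC a x hx).1
      have hrest : ∀ x ∈ sumL (l.map X), x ∈ KG G1 := by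
        intro x hx
        exact (sumL_mem_CSet _ (by
          intro W hW x' hx'
          obtain ⟨g, hg, rfl⟩ := List.mem_map.1 hW
          exact hC g x' hx') x hx).1
      rw [image_tmap_add θ hXa hrest]
      rw [dF_add ((hne a).image _)
        ((sumL_nonempty _ (by
          intro W hW
          obtain ⟨g, hg, rfl⟩ := List.mem_map.1 hW
          exact hne g)).image _)]

lemma dF_sumL_map (hcard1 : 2 < Cardinal.mk G1) (l : List G1) :
    dF (sumL (l.map (XS hcard1))) = mG (l : Multiset G1) := by
  rw [dF_sumL _ (by
    intro W hW
    obtain ⟨g, hg, rfl⟩ := List.mem_map.1 hW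
    exact XS_nonempty hcard1 g), mG_list_eq]
  rw [List.map_map]
  congr 1
  apply List.map_congr_left
  intro g _
  exact dF_XS hcard1 g

end POS

namespace POS
variable {G1 G2 : Type*} [Group G1] [Group G2]

noncomputable def fElem (θ : ProductOneSubmonoid G1 ≃+ ProductOneSubmonoid G2)
    (hcard1 : 2 < Cardinal.mk G1) (g : G1) : QG G2 :=
  QuotientAddGroup.mk (dF ((XS hcard1 g).image (tmap θ)))

noncomputable def FHom (θ : ProductOneSubmonoid G1 ≃+ ProductOneSubmonoid G2)
    (hcard1 : 2 < Cardinal.mk G1) : (G1 →₀ ℤ) →+ QG G2 :=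
  Finsupp.liftAddHom fun g => (zmultiplesHom _) (fElem θ hcard1 g)

lemma FHom_single (θ : ProductOneSubmonoid G1 ≃+ ProductOneSubmonoid G2)
    (hcard1 : 2 < Cardinal.mk G1) (g : G1) :
    FHom θ hcard1 (Finsupp.single g (1:ℤ)) = fElem θ hcard1 g := by
  rw [FHom, Finsupp.liftAddHom_apply_single]
  exact one_zsmul _

lemma FHom_mG_list (θ : ProductOneSubmonoid G1 ≃+ ProductOneSubmonoid G2)
    (hcard1 : 2 < Cardinal.mk G1) (l : List G1) :
    FHom θ hcard1 (mG (l : Multiset G1)) = (l.map (fElem θ hcard1)).sum := by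
  induction l with
  | nil => simp
  | cons a l ih =>
      have : ((a :: l : List G1) : Multiset G1) = a ::ₘ (l : Multiset G1) := rfl
      rw [this, mG_cons, map_add, FHom_single, ih, List.map_cons, List.sum_cons]

lemma list_sum_mk {G : Type*} [Group G] (L : List (G →₀ ℤ)) :
    (L.map (fun x => (QuotientAddGroup.mk x : QG G))).sum
      = QuotientAddGroup.mk (L.sum) := by
  induction L with
  | nil => simp
  | cons a L ih => rw [List.map_cons, List.sum_cons, List.sum_cons, ih]; rfl

lemma FHom_ker (θ : ProductOneSubmonoid G1 ≃+ ProductOneSubmonoid G2)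
    (htor1 : ∀ g : G1, IsOfFinOrder g) (htor2 : ∀ g : G2, IsOfFinOrder g)
    (hcard1 : 2 < Cardinal.mk G1) (hcard2 : 2 < Cardinal.mk G2) :
    KG G1 ≤ (FHom θ hcard1).ker := by
  rw [KG, AddSubgroup.closure_le]
  rintro x ⟨S, hS, rfl⟩
  rw [SetLike.mem_coe, AddMonoidHom.mem_ker]
  obtain ⟨l, hl, hp⟩ := hS
  have hprod : IsProductOne ((l : Multiset G1)) := ⟨l, rfl, hp⟩
  rw [← hl, FHom_mG_list]
  have e1 : (l.map (fElem θ hcard1)).sum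
      = QuotientAddGroup.mk ((l.map (fun g => dF ((XS hcard1 g).image (tmap θ)))).sum) := by
    rw [← list_sum_mk, List.map_map]
    rfl
  rw [e1, sum_dF_image θ l (XS hcard1) (XS_nonempty hcard1) (XS_subset_CSet hcard1)]
  have hYC : ∀ y ∈ sumL (l.map (XS hcard1)), y ∈ CSet G1 := by
    apply sumL_mem_CSet
    intro W hW x' hx'
    obtain ⟨g, hg, rfl⟩ := List.mem_map.1 hW
    exact XS_subset_CSet hcard1 g x' hx'
  have hYne : (sumL (l.map (XS hcard1))).Nonempty := by
    apply sumL_nonempty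
    intro W hW
    obtain ⟨g, hg, rfl⟩ := List.mem_map.1 hW
    exact XS_nonempty hcard1 g
  have hcongr := dF_image_congr θ htor1 htor2 hcard2 hYne
    (Finset.singleton_nonempty (mG (l : Multiset G1))) hYC
    (by
      intro x hx
      rw [Finset.mem_singleton] at hx
      rw [hx]
      exact mG_mem_CSet hprod)
    (by rw [dF_sumL_map hcard1 l, dF_singleton])
  rw [hcongr, Finset.image_singleton, tmap_mG θ hprod, dF_singleton]
  exact (QuotientAddGroup.eq_zero_iff _).2
    (mem_KG_of_productOne (θ ⟨(l : Multiset G1), hprod⟩).2)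

noncomputable def Fbar (θ : ProductOneSubmonoid G1 ≃+ ProductOneSubmonoid G2)
    (htor1 : ∀ g : G1, IsOfFinOrder g) (htor2 : ∀ g : G2, IsOfFinOrder g)
    (hcard1 : 2 < Cardinal.mk G1) (hcard2 : 2 < Cardinal.mk G2) : QG G1 →+ QG G2 :=
  QuotientAddGroup.lift (KG G1) (FHom θ hcard1) (FHom_ker θ htor1 htor2 hcard1 hcard2)

lemma Fbar_mk (θ : ProductOneSubmonoid G1 ≃+ ProductOneSubmonoid G2)
    (htor1 : ∀ g : G1, IsOfFinOrder g) (htor2 : ∀ g : G2, IsOfFinOrder g)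
    (hcard1 : 2 < Cardinal.mk G1) (hcard2 : 2 < Cardinal.mk G2) (x : G1 →₀ ℤ) :
    Fbar θ htor1 htor2 hcard1 hcard2 (QuotientAddGroup.mk x) = FHom θ hcard1 x := rfl

/-- composition at generators -/
lemma comp_gen (θ : ProductOneSubmonoid G1 ≃+ ProductOneSubmonoid G2)
    (htor1 : ∀ g : G1, IsOfFinOrder g) (htor2 : ∀ g : G2, IsOfFinOrder g)
    (hcard1 : 2 < Cardinal.mk G1) (hcard2 : 2 < Cardinal.mk G2) (g : G1) :
    Fbar θ.symm htor2 htor1 hcard2 hcard1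
      (Fbar θ htor1 htor2 hcard1 hcard2 (QuotientAddGroup.mk (Finsupp.single g (1:ℤ))))
      = QuotientAddGroup.mk (Finsupp.single g (1:ℤ)) := by
  set u := dF ((XS hcard1 g).image (tmap θ)) with hu
  have himC : ∀ x ∈ (XS hcard1 g).image (tmap θ), x ∈ CSet G2 := by
    intro x hx
    obtain ⟨y, hy, rfl⟩ := Finset.mem_image.1 hx
    exact tmap_CSet θ htor1 (XS_subset_CSet hcard1 g y hy)
  have hune : ((XS hcard1 g).image (tmap θ)).Nonempty := (XS_nonempty hcard1 g).image _
  have hu_nonneg : ∀ k, 0 ≤ u k := by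
    intro k
    exact dF_nonneg (fun x hx k' => (himC x hx).2 k') k
  obtain ⟨U, hU⟩ := exists_multiset_of_nonneg hu_nonneg
  have hlU : ((U.toList : List G2) : Multiset G2) = U := Multiset.coe_toList U
  rw [Fbar_mk, FHom_single, fElem, Fbar_mk, ← hu]
  rw [← hU, ← hlU, FHom_mG_list]
  have e1 : (U.toList.map (fElem θ.symm hcard2)).sum
      = QuotientAddGroup.mk
        ((U.toList.map (fun g' => dF ((XS hcard2 g').image (tmap θ.symm)))).sum) := by
    rw [← list_sum_mk, List.map_map]
    rfl
  rw [e1, sum_dF_image θ.symm U.toList (XS hcard2) (XS_nonempty hcard2) (XS_subset_CSet hcard2)]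
  -- now : mk (dF ((sumL (U.toList.map (XS hcard2))).image (tmap θ.symm))) = mk (single g 1)
  have hYC : ∀ y ∈ sumL (U.toList.map (XS hcard2)), y ∈ CSet G2 := by
    apply sumL_mem_CSet
    intro W hW x' hx'
    obtain ⟨g', hg', rfl⟩ := List.mem_map.1 hW
    exact XS_subset_CSet hcard2 g' x' hx'
  have hYne : (sumL (U.toList.map (XS hcard2))).Nonempty := by
    apply sumL_nonempty
    intro W hW
    obtain ⟨g', hg', rfl⟩ := List.mem_map.1 hW
    exact XS_nonempty hcard2 g'
  have hdY : dF (sumL (U.toList.map (XS hcard2))) = u := by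
    rw [dF_sumL_map hcard2 U.toList, hlU, hU]
  have hcongr := dF_image_congr θ.symm htor2 htor1 hcard1 hYne hune hYC himC
    (by rw [hdY, hu])
  rw [hcongr]
  have him2 : ((XS hcard1 g).image (tmap θ)).image (tmap θ.symm) = XS hcard1 g := by
    rw [Finset.image_image]
    have : ∀ x ∈ XS hcard1 g, (tmap θ.symm ∘ tmap θ) x = x := by
      intro x hx
      exact tmap_symm_tmap θ (XS_subset_CSet hcard1 g x hx).1
    calc (XS hcard1 g).image (tmap θ.symm ∘ tmap θ) = (XS hcard1 g).image id :=
          Finset.image_congr this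
    _ = XS hcard1 g := Finset.image_id
  rw [him2, dF_XS hcard1 g]

noncomputable def QEquivPOS (θ : ProductOneSubmonoid G1 ≃+ ProductOneSubmonoid G2)
    (htor1 : ∀ g : G1, IsOfFinOrder g) (htor2 : ∀ g : G2, IsOfFinOrder g)
    (hcard1 : 2 < Cardinal.mk G1) (hcard2 : 2 < Cardinal.mk G2) : QG G1 ≃+ QG G2 where
  toFun := Fbar θ htor1 htor2 hcard1 hcard2
  invFun := Fbar θ.symm htor2 htor1 hcard2 hcard1
  left_inv := by
    have key : ((Fbar θ.symm htor2 htor1 hcard2 hcard1).comp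
        (Fbar θ htor1 htor2 hcard1 hcard2)).comp (QuotientAddGroup.mk' (KG G1))
        = QuotientAddGroup.mk' (KG G1) := by
      apply Finsupp.addHom_ext'
      intro g
      apply AddMonoidHom.ext_int
      simp only [AddMonoidHom.comp_apply, Finsupp.singleAddHom_apply]
      exact comp_gen θ htor1 htor2 hcard1 hcard2 g
    intro q
    obtain ⟨x, rfl⟩ := QuotientAddGroup.mk'_surjective (KG G1) q
    exact DFunLike.congr_fun key x
  right_inv := by
    have key : ((Fbar θ htor1 htor2 hcard1 hcard2).comp
        (Fbar θ.symm htor2 htor1 hcard2 hcard1)).comp (QuotientAddGroup.mk' (KG G2))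
        = QuotientAddGroup.mk' (KG G2) := by
      apply Finsupp.addHom_ext'
      intro g
      apply AddMonoidHom.ext_int
      simp only [AddMonoidHom.comp_apply, Finsupp.singleAddHom_apply]
      have hgen := comp_gen θ.symm htor2 htor1 hcard2 hcard1 g
      rw [AddEquiv.symm_symm] at hgen
      exact hgen
    intro q
    obtain ⟨x, rfl⟩ := QuotientAddGroup.mk'_surjective (KG G2) q
    exact DFunLike.congr_fun key x
  map_add' := map_add _

end POS

theorem monoid_iso_implies_abelianization_iso (G1 G2 : Type*) [Group G1] [Group G2]
    (htor1 : ∀ g : G1, IsOfFinOrder g) (htor2 : ∀ g : G2, IsOfFinOrder g)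
    (hcard1 : 2 < Cardinal.mk G1) (hcard2 : 2 < Cardinal.mk G2)
    (h : Nonempty (ProductOneSubmonoid G1 ≃+ ProductOneSubmonoid G2)) :
    Nonempty (Abelianization G1 ≃* Abelianization G2) := by
  obtain ⟨θ⟩ := h
  have e : Additive (Abelianization G1) ≃+ Additive (Abelianization G2) :=
    (POS.stepA G1).trans ((POS.QEquivPOS θ htor1 htor2 hcard1 hcard2).trans
      (POS.stepA G2).symm)
  exact ⟨MulEquiv.toAdditive.symm e⟩
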